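/- Let triangle ABC have angles α at A, β at B, γ at C, with 30° < α, β < 150°. Then the 2×2 matrix M = [[1, (cos 2α · sin β − cos α · sin γ) sin γ / sin³ α], [0, sin² β / sin² α]] satisfies det M ≥ 1/4 and the Frobenius norm of M is less than 20; in particular the operator norm of M is less than 20. -/

import Mathlib

open Real

private lemma mul_one_bound {c s : ℝ} (hc1 : -1 ≤ c) (hc2 : c ≤ 1) (hs1 : -1 ≤ s)
    (hs2 : s ≤ 1) : -1 ≤ c * s ∧ c * s ≤ 1 := by
  constructor <;> nlinarith

private lemma mul_two_bound {u v : ℝ} (hu1 : -2 ≤ u) (hu2 : u ≤ 2) (hv1 : -1 ≤ v)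
    (hv2 : v ≤ 1) : -2 ≤ u * v ∧ u * v ≤ 2 := by
  constructor <;> nlinarith

private lemma div_sq_le {n s : ℝ} (hs : 1 / 8 < s) (hn1 : -2 ≤ n) (hn2 : n ≤ 2) :
    (n / s) ^ 2 ≤ 256 := by
  have hs0 : 0 < s := by linarith
  rw [div_pow, div_le_iff₀ (by positivity)]
  nlinarith [sq_nonneg n]

private lemma sin_gt_half {x : ℝ} (h1 : π / 6 < x) (h2 : x < 5 * π / 6) : 1 / 2 < Real.sin x := by
  have hpi := Real.pi_pos
  have key : ∀ y : ℝ, π / 6 < y → y ≤ π / 2 → 1 / 2 < Real.sin y := by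
    intro y hy1 hy2
    have := Real.strictMonoOn_sin (a := π / 6) (b := y)
      ⟨by linarith, by linarith⟩ ⟨by linarith, hy2⟩ hy1
    rwa [Real.sin_pi_div_six] at this
  rcases le_or_gt x (π / 2) with hx | hx
  · exact key x h1 hx
  · rw [← Real.sin_pi_sub]
    exact key (π - x) (by linarith) (by linarith)

private lemma main_aux (a d : ℝ) (ha2 : a ^ 2 ≤ 256) (hd14 : 1 / 4 ≤ d) (hd2 : d ^ 2 ≤ 16) :
    (1 / 4 : ℝ) ≤ (!![1, a; 0, d] : Matrix (Fin 2) (Fin 2) ℝ).det ∧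
    Real.sqrt (∑ i : Fin 2, ∑ j : Fin 2,
        (!![1, a; 0, d] : Matrix (Fin 2) (Fin 2) ℝ) i j ^ 2) < 20 ∧
    ‖Matrix.toEuclideanCLM (𝕜 := ℝ)
        (!![1, a; 0, d] : Matrix (Fin 2) (Fin 2) ℝ)‖ < 20 := by
  refine ⟨?_, ?_, ?_⟩
  · rw [Matrix.det_fin_two_of]
    linarith
  · have hsum2 : (∑ i : Fin 2, ∑ j : Fin 2,
        (!![1, a; 0, d] : Matrix (Fin 2) (Fin 2) ℝ) i j ^ 2) = 1 + a ^ 2 + d ^ 2 := by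
      simp [Fin.sum_univ_two]
    rw [hsum2]
    have h400 : (1 : ℝ) + a ^ 2 + d ^ 2 < 400 := by linarith
    calc Real.sqrt (1 + a ^ 2 + d ^ 2) < Real.sqrt 400 :=
          Real.sqrt_lt_sqrt (by positivity) h400
      _ = 20 := by
        rw [show (400 : ℝ) = 20 ^ 2 by norm_num, Real.sqrt_sq (by norm_num)]
  · have hbound : ‖Matrix.toEuclideanCLM (𝕜 := ℝ)
        (!![1, a; 0, d] : Matrix (Fin 2) (Fin 2) ℝ)‖ ≤ 17 := by
      apply ContinuousLinearMap.opNorm_le_bound _ (by norm_num)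
      intro x
      have happ : Matrix.toEuclideanCLM (𝕜 := ℝ) (!![1, a; 0, d]) x =
          (WithLp.equiv 2 (Fin 2 → ℝ)).symm
            ((!![1, a; 0, d] : Matrix (Fin 2) (Fin 2) ℝ).mulVec
              (WithLp.equiv 2 (Fin 2 → ℝ) x)) := by
        rfl
      rw [happ, EuclideanSpace.norm_eq, EuclideanSpace.norm_eq]
      have hmv : ∀ i, ((!![1, a; 0, d] : Matrix (Fin 2) (Fin 2) ℝ).mulVec
          (WithLp.equiv 2 (Fin 2 → ℝ) x)) i =
          if i = 0 then x 0 + a * x 1 else d * x 1 := by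
        intro i
        fin_cases i <;>
          simp [Matrix.mulVec, dotProduct, Fin.sum_univ_two, Matrix.vecHead, Matrix.vecTail] <;> ring
      have hs1 : (∑ i : Fin 2, ‖(WithLp.equiv 2 (Fin 2 → ℝ)).symm
          ((!![1, a; 0, d] : Matrix (Fin 2) (Fin 2) ℝ).mulVec
            (WithLp.equiv 2 (Fin 2 → ℝ) x)) i‖ ^ 2) =
          (x 0 + a * x 1) ^ 2 + (d * x 1) ^ 2 := by
        simp only [Fin.sum_univ_two, WithLp.equiv_symm_apply, WithLp.ofLp_toLp, Real.norm_eq_abs, sq_abs]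
        rw [hmv 0, hmv 1]
        norm_num
      have hs2' : (∑ i : Fin 2, ‖x i‖ ^ 2) = x 0 ^ 2 + x 1 ^ 2 := by
        simp [Fin.sum_univ_two, sq_abs]
      rw [hs1, hs2']
      have hkey : (x 0 + a * x 1) ^ 2 + (d * x 1) ^ 2 ≤ 289 * (x 0 ^ 2 + x 1 ^ 2) := by
        nlinarith [sq_nonneg (a * x 0 - x 1), sq_nonneg (x 0), sq_nonneg (x 1),
          mul_nonneg (sq_nonneg a) (sq_nonneg (x 1)), sq_nonneg (x 0 * x 1)]
      calc Real.sqrt ((x 0 + a * x 1) ^ 2 + (d * x 1) ^ 2)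
          ≤ Real.sqrt (289 * (x 0 ^ 2 + x 1 ^ 2)) := Real.sqrt_le_sqrt hkey
        _ = 17 * Real.sqrt (x 0 ^ 2 + x 1 ^ 2) := by
            rw [Real.sqrt_mul (by norm_num),
              show (289 : ℝ) = 17 ^ 2 by norm_num, Real.sqrt_sq (by norm_num)]
    linarith

/-- For a triangle with angles `α, β, γ` (positive, summing to `π`) with
`30° < α, β < 150°`, the matrix
`M = [[1, (cos 2α sin β − cos α sin γ) sin γ / sin³ α], [0, sin² β / sin² α]]`
has determinant at least `1/4`, Frobenius norm less than `20`, and operator norm (as a map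
on the Euclidean plane) less than `20`. -/
theorem derivative_matrix_bounds (α β γ : ℝ) (hα0 : 0 < α) (hβ0 : 0 < β) (hγ0 : 0 < γ)
    (hsum : α + β + γ = π)
    (hα : π / 6 < α ∧ α < 5 * π / 6) (hβ : π / 6 < β ∧ β < 5 * π / 6) :
    (1 / 4 : ℝ) ≤
        (!![1, (cos (2 * α) * sin β - cos α * sin γ) * sin γ / sin α ^ 3;
            0, sin β ^ 2 / sin α ^ 2] : Matrix (Fin 2) (Fin 2) ℝ).det ∧
    Real.sqrt (∑ i : Fin 2, ∑ j : Fin 2,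
        (!![1, (cos (2 * α) * sin β - cos α * sin γ) * sin γ / sin α ^ 3;
            0, sin β ^ 2 / sin α ^ 2] : Matrix (Fin 2) (Fin 2) ℝ) i j ^ 2) < 20 ∧
    ‖Matrix.toEuclideanCLM (𝕜 := ℝ)
        (!![1, (cos (2 * α) * sin β - cos α * sin γ) * sin γ / sin α ^ 3;
            0, sin β ^ 2 / sin α ^ 2] : Matrix (Fin 2) (Fin 2) ℝ)‖ < 20 := by
  have hsa : 1 / 2 < sin α := sin_gt_half hα.1 hα.2
  have hsb : 1 / 2 < sin β := sin_gt_half hβ.1 hβ.2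
  have hsa1 : sin α ≤ 1 := Real.sin_le_one α
  have hsb1 : sin β ≤ 1 := Real.sin_le_one β
  have hsg1 : |sin γ| ≤ 1 := Real.abs_sin_le_one γ
  have hca : |cos α| ≤ 1 := Real.abs_cos_le_one α
  have hc2a : |cos (2 * α)| ≤ 1 := Real.abs_cos_le_one (2 * α)
  rw [abs_le] at hsg1 hca hc2a
  have hsa0 : (0 : ℝ) < sin α := by linarith
  have hs3 : (1 / 8 : ℝ) < sin α ^ 3 := by
    have := pow_lt_pow_left₀ hsa (by norm_num : (0:ℝ) ≤ 1 / 2) (n := 3) (by norm_num)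
    norm_num at this
    linarith
  have hs2 : (1 / 4 : ℝ) < sin α ^ 2 := by
    have := pow_lt_pow_left₀ hsa (by norm_num : (0:ℝ) ≤ 1 / 2) (n := 2) (by norm_num)
    norm_num at this
    linarith
  have hb1 := mul_one_bound hc2a.1 hc2a.2 (by linarith : (-1:ℝ) ≤ sin β) hsb1
  have hb2 := mul_one_bound hca.1 hca.2 hsg1.1 hsg1.2
  have hnum : -2 ≤ (cos (2 * α) * sin β - cos α * sin γ) * sin γ ∧
      (cos (2 * α) * sin β - cos α * sin γ) * sin γ ≤ 2 :=
    mul_two_bound (by linarith [hb1.1, hb2.2]) (by linarith [hb1.2, hb2.1]) hsg1.1 hsg1.2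
  have ha2 : ((cos (2 * α) * sin β - cos α * sin γ) * sin γ / sin α ^ 3) ^ 2 ≤ 256 :=
    div_sq_le hs3 hnum.1 hnum.2
  have hd14 : (1 / 4 : ℝ) ≤ sin β ^ 2 / sin α ^ 2 := by
    rw [le_div_iff₀ (by positivity)]
    nlinarith
  have hd2 : (sin β ^ 2 / sin α ^ 2) ^ 2 ≤ 16 := by
    have h4 : sin β ^ 2 / sin α ^ 2 ≤ 4 := by
      rw [div_le_iff₀ (by positivity)]
      nlinarith
    have h0 : (0 : ℝ) ≤ sin β ^ 2 / sin α ^ 2 := by positivity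
    nlinarith
  exact main_aux _ _ ha2 hd14 hd2
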